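/- Fix k with 0 ≤ k ≤ n (with the conventions z_0 = −∞ and z_{n+1} = +∞) and let x ∈ ℝ satisfy z_k < x < z_{k+1}. Then the limit of g(z) as z → x with z ∈ ℍ exists and equals (∏_{j=1}^n |x − z_j|^{−β_j}) · exp(−iπ·∑_{j=k+1}^n β_j). In particular, the argument of the boundary value of g is constant on each interval (z_k, z_{k+1}) of the real axis, which is the statement that the Schwarz–Christoffel map SC (a primitive of g) maps each interval [z_k, z_{k+1}] onto a straight line segment. -/

import Mathlib

open Complex Filter

/-- Boundary values of the Schwarz–Christoffel integrand: for `x` in the real interval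
`(z_k, z_{k+1})` (conventions `z_0 = −∞`, `z_{n+1} = +∞`; here `k` counts how many of
the `z_j` lie to the left of `x`), the limit of `g(z) = ∏ⱼ exp(−βⱼ · Log(z − zⱼ))`
as `z → x` within the upper half-plane exists and equals
`(∏ⱼ |x − zⱼ|^{−βⱼ}) · exp(−iπ·∑_{j > k} βⱼ)`.  In particular the argument of the
boundary value is constant on each interval, so `SC` maps it onto a line segment. -/
theorem schwarz_christoffel_boundary_limit
    (n : ℕ) (hn : 1 ≤ n) (z : Fin n → ℝ) (hz : StrictMono z) (β : Fin n → ℝ)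
    (g : ℂ → ℂ)
    (hg : ∀ w : ℂ, g w =
      ∏ j : Fin n, Complex.exp (-(β j : ℂ) * Complex.log (w - (z j : ℂ))))
    (k : ℕ) (hk : k ≤ n) (x : ℝ)
    (hx₁ : ∀ j : Fin n, (j : ℕ) < k → z j < x)
    (hx₂ : ∀ j : Fin n, k ≤ (j : ℕ) → x < z j) :
    Tendsto g (nhdsWithin (x : ℂ) {w : ℂ | 0 < w.im})
      (nhds (((∏ j : Fin n, |x - z j| ^ (-(β j)) : ℝ) : ℂ) *
        Complex.exp (-(Real.pi : ℂ) * Complex.I *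
          ∑ j ∈ Finset.univ.filter (fun j : Fin n => k ≤ (j : ℕ)), (β j : ℂ)))) := by
  set H : Set ℂ := {w : ℂ | 0 < w.im} with hH
  set L : Fin n → ℂ := fun j =>
    Complex.exp (-(β j : ℂ) * ((Real.log |x - z j| : ℂ) +
      (if k ≤ (j : ℕ) then (Real.pi : ℂ) * Complex.I else 0))) with hL
  have key : ∀ j : Fin n,
      Tendsto (fun w : ℂ => Complex.exp (-(β j : ℂ) * Complex.log (w - (z j : ℂ))))
        (nhdsWithin (x : ℂ) H) (nhds (L j)) := by
    intro j
    by_cases hj : k ≤ (j : ℕ)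
    · have hxz := hx₂ j hj
      have hmap : Tendsto (fun w : ℂ => w - (z j : ℂ)) (nhdsWithin (x : ℂ) H)
          (nhdsWithin ((x : ℂ) - (z j : ℂ)) {w : ℂ | 0 ≤ w.im}) := by
        apply tendsto_nhdsWithin_of_tendsto_nhds_of_eventually_within
        · exact ((continuous_sub_right ((z j : ℝ) : ℂ)).tendsto (x : ℂ)).mono_left
            nhdsWithin_le_nhds
        · filter_upwards [self_mem_nhdsWithin] with w hw
          simp only [Set.mem_setOf_eq, Complex.sub_im, Complex.ofReal_im, sub_zero]
          exact le_of_lt hw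
      have hc : ((x : ℂ) - (z j : ℂ)).re < 0 := by
        simp only [Complex.sub_re, Complex.ofReal_re]; linarith
      have hc' : ((x : ℂ) - (z j : ℂ)).im = 0 := by
        simp [Complex.sub_im]
      have hlog :=
        (Complex.tendsto_log_nhdsWithin_im_nonneg_of_re_neg_of_im_zero hc hc').comp hmap
      have habs : ‖((x : ℂ) - (z j : ℂ))‖ = |x - z j| := by
        rw [← Complex.ofReal_sub, Complex.norm_real, Real.norm_eq_abs]
      rw [habs] at hlog
      have := Complex.continuous_exp.continuousAt.tendsto.comp
        ((tendsto_const_nhds (x := (-(β j : ℂ)))).mul hlog)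
      simpa [hL, hj, Function.comp_def] using this
    · have hxz := hx₁ j (lt_of_not_ge hj)
      have hmem : ((x : ℂ) - (z j : ℂ)) ∈ Complex.slitPlane := by
        left
        simp only [Complex.sub_re, Complex.ofReal_re]; linarith
      have hmap0 : Tendsto (fun w : ℂ => w - (z j : ℂ)) (nhdsWithin (x : ℂ) H)
          (nhds ((x : ℂ) - (z j : ℂ))) :=
        ((continuous_sub_right ((z j : ℝ) : ℂ)).tendsto (x : ℂ)).mono_left nhdsWithin_le_nhds
      have hlog : Tendsto (fun w : ℂ => Complex.log (w - (z j : ℂ))) (nhdsWithin (x : ℂ) H)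
          (nhds (Complex.log ((x : ℂ) - (z j : ℂ)))) :=
        (continuousAt_clog hmem).tendsto.comp hmap0
      have hval : Complex.log ((x : ℂ) - (z j : ℂ)) = (Real.log |x - z j| : ℂ) := by
        rw [← Complex.ofReal_sub, ← Complex.ofReal_log (by linarith : (0:ℝ) ≤ x - z j),
          abs_of_pos (by linarith : (0:ℝ) < x - z j)]
      rw [hval] at hlog
      have := Complex.continuous_exp.continuousAt.tendsto.comp
        ((tendsto_const_nhds (x := (-(β j : ℂ)))).mul hlog)
      simpa [hL, hj, Function.comp_def] using this
  have hprod : Tendsto g (nhdsWithin (x : ℂ) H) (nhds (∏ j : Fin n, L j)) := by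
    have := tendsto_finset_prod (Finset.univ : Finset (Fin n)) (fun j _ => key j)
    exact this.congr (fun w => (hg w).symm)
  have hsplit : ∀ j : Fin n, L j =
      (((|x - z j| ^ (-(β j)) : ℝ)) : ℂ) *
        (if k ≤ (j : ℕ) then Complex.exp (-(Real.pi : ℂ) * Complex.I * (β j : ℂ)) else 1) := by
    intro j
    have hpos : (0:ℝ) < |x - z j| := by
      rcases lt_or_ge (j : ℕ) k with h | h
      · have := hx₁ j h; rw [abs_pos]; intro hc; linarith [sub_eq_zero.mp hc]
      · have := hx₂ j h; rw [abs_pos]; intro hc; linarith [sub_eq_zero.mp hc]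
    have hr : ((|x - z j| ^ (-(β j)) : ℝ) : ℂ)
        = Complex.exp (-(β j : ℂ) * (Real.log |x - z j| : ℂ)) := by
      rw [Real.rpow_def_of_pos hpos, Complex.ofReal_exp]
      push_cast; ring_nf
    by_cases hj : k ≤ (j : ℕ)
    · simp only [hL, hj, if_true, mul_add, Complex.exp_add, hr]
      ring_nf
    · simp only [hL, hj, if_false, add_zero, hr, mul_one]
  have hval : (∏ j : Fin n, L j) =
      ((∏ j : Fin n, |x - z j| ^ (-(β j)) : ℝ) : ℂ) *
        Complex.exp (-(Real.pi : ℂ) * Complex.I *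
          ∑ j ∈ Finset.univ.filter (fun j : Fin n => k ≤ (j : ℕ)), (β j : ℂ)) := by
    calc (∏ j : Fin n, L j)
        = ∏ j : Fin n, ((((|x - z j| ^ (-(β j)) : ℝ)) : ℂ) *
            (if k ≤ (j : ℕ) then Complex.exp (-(Real.pi : ℂ) * Complex.I * (β j : ℂ)) else 1)) :=
          Finset.prod_congr rfl fun j _ => hsplit j
      _ = (∏ j : Fin n, (((|x - z j| ^ (-(β j)) : ℝ)) : ℂ)) *
            ∏ j : Fin n, (if k ≤ (j : ℕ) then
              Complex.exp (-(Real.pi : ℂ) * Complex.I * (β j : ℂ)) else 1) :=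
          Finset.prod_mul_distrib
      _ = _ := by
          congr 1
          · push_cast; rfl
          · rw [← Finset.prod_filter, ← Complex.exp_sum, ← Finset.mul_sum]
  rw [← hval]
  exact hprod
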